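/- arXiv:0810.3354 — 4 statements merged into one kernel-verified Lean document; each statement's English description precedes it below -/
import Mathlib

section
/- Let g ≥ 1 and let L be the free Lie algebra over ℚ on 2g generators e_1, …, e_{2g}. For every n ≥ 2, the images of the left-normed Lie monomials w(i_1,…,i_n) = [[⋯[[e_{i_1},e_{i_2}],e_{i_3}],⋯],e_{i_n}], taken over all admissible tuples (i_1,…,i_n) (i.e. tuples of indices in {1,…,2g} with i_1 < i_2 ≥ i_3 ≥ ⋯ ≥ i_n), are ℚ-linearly independent in the quotient vector space L/(L^{n+1} + I), where L^{n+1} is the (n+1)-st term of the lower central series of L and I = [[L,L],[L,L]]. -/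
/-- The left-normed iterated bracket `[[⋯[x, e_{i_1}], ⋯], e_{i_m}]` obtained by
successively bracketing `x` with the generators indexed by the list. -/
noncomputable def leftNormedBracket {g : ℕ} :
    FreeLieAlgebra ℚ (Fin (2 * g)) → List (Fin (2 * g)) → FreeLieAlgebra ℚ (Fin (2 * g))
  | x, [] => x
  | x, i :: t => leftNormedBracket ⁅x, FreeLieAlgebra.of ℚ i⁆ t

/-- An admissible tuple `(i_1, i_2, …, i_n)` of indices in `Fin (2g)`:
`i_1 < i_2 ≥ i_3 ≥ ⋯ ≥ i_n`.  The entries `i_3, …, i_n` are recorded by the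
function `rest : Fin (n-2) → Fin (2g)`. -/
structure AdmissibleTuple (g n : ℕ) where
  i1 : Fin (2 * g)
  i2 : Fin (2 * g)
  rest : Fin (n - 2) → Fin (2 * g)
  lt : i1 < i2
  le : ∀ k, rest k ≤ i2
  anti : Antitone rest

/-- The left-normed Lie monomial `w(i_1,…,i_n) = [[⋯[[e_{i_1},e_{i_2}],e_{i_3}],⋯],e_{i_n}]`
attached to an admissible tuple. -/
noncomputable def wMonomial {g n : ℕ} (t : AdmissibleTuple g n) : FreeLieAlgebra ℚ (Fin (2 * g)) :=
  leftNormedBracket ⁅FreeLieAlgebra.of ℚ t.i1, FreeLieAlgebra.of ℚ t.i2⁆ (List.ofFn t.rest)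

open MvPolynomial

namespace Lemma21

variable {g : ℕ}

abbrev S (g : ℕ) := MvPolynomial (Fin (2*g)) ℚ

abbrev A (g : ℕ) : Type := (Fin (2*g) → ℚ) × (Fin (2*g) → S g)

noncomputable def mval (v : Fin (2*g) → ℚ) : S g := ∑ i, MvPolynomial.C (v i) * X i

lemma mval_zero : mval (0 : Fin (2*g) → ℚ) = 0 := by simp [mval]

lemma mval_add (v v' : Fin (2*g) → ℚ) : mval (v + v') = mval v + mval v' := by
  simp [mval, add_mul, Finset.sum_add_distrib]

lemma mval_smul (q : ℚ) (v : Fin (2*g) → ℚ) : mval (q • v) = q • mval v := by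
  simp [mval, Finset.smul_sum, smul_eq_C_mul, mul_assoc]

lemma mval_single (i : Fin (2*g)) : mval (Pi.single i (1:ℚ)) = X i := by
  rw [mval, Finset.sum_eq_single i]
  · simp
  · intro j _ hj; simp [Pi.single_apply, hj]
  · simp

noncomputable instance : LieRing (A g) :=
  { (inferInstance : AddCommGroup (A g)) with
    bracket := fun x y =>
      (0, fun j => mval x.1 * (y.2 j + C (y.1 j)) - mval y.1 * (x.2 j + C (x.1 j)))
    add_lie := by
      intro x y z
      refine Prod.ext (by simp) ?_
      funext j
      show mval (x.1 + y.1) * (z.2 j + C (z.1 j)) - mval z.1 * ((x.2 j + y.2 j) + C (x.1 j + y.1 j))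
        = _
      simp only [mval_add, map_add]
      show _ = (mval x.1 * (z.2 j + C (z.1 j)) - mval z.1 * (x.2 j + C (x.1 j)))
        + (mval y.1 * (z.2 j + C (z.1 j)) - mval z.1 * (y.2 j + C (y.1 j)))
      ring
    lie_add := by
      intro x y z
      refine Prod.ext (by simp) ?_
      funext j
      show mval x.1 * ((y.2 j + z.2 j) + C (y.1 j + z.1 j)) - mval (y.1 + z.1) * (x.2 j + C (x.1 j))
        = _
      simp only [mval_add, map_add]
      show _ = (mval x.1 * (y.2 j + C (y.1 j)) - mval y.1 * (x.2 j + C (x.1 j)))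
        + (mval x.1 * (z.2 j + C (z.1 j)) - mval z.1 * (x.2 j + C (x.1 j)))
      ring
    lie_self := by
      intro x
      refine Prod.ext (by simp) ?_
      funext j
      show mval x.1 * (x.2 j + C (x.1 j)) - mval x.1 * (x.2 j + C (x.1 j)) = 0
      ring
    leibniz_lie := by
      intro x y z
      refine Prod.ext (by simp) ?_
      funext j
      show mval x.1 * ((mval y.1 * (z.2 j + C (z.1 j)) - mval z.1 * (y.2 j + C (y.1 j))) + C 0)
          - mval (0 : Fin (2*g) → ℚ) * (x.2 j + C (x.1 j)) = _
      show _ = (mval (0 : Fin (2*g) → ℚ) * (z.2 j + C (z.1 j))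
            - mval z.1 * ((mval x.1 * (y.2 j + C (y.1 j)) - mval y.1 * (x.2 j + C (x.1 j))) + C 0))
          + (mval y.1 * ((mval x.1 * (z.2 j + C (z.1 j)) - mval z.1 * (x.2 j + C (x.1 j))) + C 0)
            - mval (0 : Fin (2*g) → ℚ) * (y.2 j + C (y.1 j)))
      simp only [mval_zero, map_zero]
      ring }

lemma bracket_fst (x y : A g) : ⁅x, y⁆.1 = 0 := rfl

lemma bracket_snd (x y : A g) (j : Fin (2*g)) :
    ⁅x, y⁆.2 j = mval x.1 * (y.2 j + C (y.1 j)) - mval y.1 * (x.2 j + C (x.1 j)) := rfl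

lemma bracket_def (x y : A g) :
    ⁅x, y⁆ = ((0 : Fin (2*g) → ℚ),
      fun j => mval x.1 * (y.2 j + C (y.1 j)) - mval y.1 * (x.2 j + C (x.1 j))) := rfl

noncomputable instance : LieAlgebra ℚ (A g) where
  lie_smul := by
    intro q x y
    refine Prod.ext (by show (0 : Fin (2*g) → ℚ) = q • 0; rw [smul_zero]) ?_
    funext j
    show mval x.1 * (q • y.2 j + C (q • y.1 j)) - mval (q • y.1) * (x.2 j + C (x.1 j))
      = q • (mval x.1 * (y.2 j + C (y.1 j)) - mval y.1 * (x.2 j + C (x.1 j)))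
    simp only [mval_smul, smul_eq_mul, smul_eq_C_mul, map_mul]
    ring

end Lemma21


namespace Lemma21

variable {g n : ℕ}

/-- Total degree of an exponent vector. -/
def deg (d : Fin (2*g) →₀ ℕ) : ℕ := d.sum fun _ e => e

lemma deg_add (d d' : Fin (2*g) →₀ ℕ) : deg (d + d') = deg d + deg d' :=
  Finsupp.sum_add_index' (fun _ => rfl) (fun _ _ _ => rfl)

lemma deg_single (i : Fin (2*g)) : deg (Finsupp.single i 1) = 1 := by
  simp [deg, Finsupp.sum_single_index]

/-- The submodule of polynomials all of whose monomials have degree ≥ k. -/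
noncomputable def Pdeg (g : ℕ) (k : ℕ) : Submodule ℚ (S g) where
  carrier := {p | ∀ d, deg d < k → MvPolynomial.coeff d p = 0}
  add_mem' := by intro p q hp hq d hd; rw [MvPolynomial.coeff_add, hp d hd, hq d hd, add_zero]
  zero_mem' := by intro d _; simp
  smul_mem' := by intro c p hp d hd; rw [MvPolynomial.coeff_smul, hp d hd, smul_zero]

lemma mem_Pdeg {k : ℕ} {p : S g} : p ∈ Pdeg g k ↔ ∀ d, deg d < k → MvPolynomial.coeff d p = 0 :=
  Iff.rfl

lemma Pdeg_zero (p : S g) : p ∈ Pdeg g 0 := fun d hd => absurd hd (Nat.not_lt_zero _)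

lemma Pdeg_anti {k : ℕ} {p : S g} (hp : p ∈ Pdeg g (k+1)) : p ∈ Pdeg g k :=
  fun d hd => hp d (Nat.lt_succ_of_lt hd)

lemma X_mul_Pdeg {k : ℕ} (i : Fin (2*g)) {p : S g} (hp : p ∈ Pdeg g k) :
    X i * p ∈ Pdeg g (k+1) := by
  intro d hd
  by_cases h : d i = 0
  · rw [MvPolynomial.coeff_X_mul']
    rw [if_neg]
    simp [Finsupp.mem_support_iff, h]
  · have hdec : d = Finsupp.single i 1 + (d - Finsupp.single i 1) := by
      ext j
      simp only [Finsupp.add_apply, Finsupp.tsub_apply, Finsupp.single_apply]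
      by_cases hj : i = j
      · subst hj; rw [if_pos rfl]; omega
      · simp [hj]
    rw [hdec, MvPolynomial.coeff_X_mul]
    apply hp
    have := deg_add (Finsupp.single i 1) (d - Finsupp.single i 1)
    rw [← hdec, deg_single] at this
    omega

lemma mval_mul_Pdeg {k : ℕ} (v : Fin (2*g) → ℚ) {p : S g} (hp : p ∈ Pdeg g k) :
    mval v * p ∈ Pdeg g (k+1) := by
  rw [mval, Finset.sum_mul]
  apply Submodule.sum_mem
  intro i _
  rw [mul_assoc, ← MvPolynomial.smul_eq_C_mul]
  exact Submodule.smul_mem _ _ (X_mul_Pdeg i hp)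

/-- The filtration ideal: first component vanishes (for k ≥ 1) and second component
has all monomials of degree ≥ k. -/
def AK (g : ℕ) (k : ℕ) : LieIdeal ℚ (A g) where
  carrier := {x | (k ≠ 0 → x.1 = 0) ∧ ∀ j, x.2 j ∈ Pdeg g k}
  add_mem' := by
    rintro x y ⟨hx1, hx2⟩ ⟨hy1, hy2⟩
    refine ⟨fun h => ?_, fun j => Submodule.add_mem _ (hx2 j) (hy2 j)⟩
    show x.1 + y.1 = 0
    rw [hx1 h, hy1 h, add_zero]
  zero_mem' := ⟨fun _ => rfl, fun j => Submodule.zero_mem _⟩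
  smul_mem' := by
    rintro c x ⟨hx1, hx2⟩
    refine ⟨fun h => ?_, fun j => Submodule.smul_mem _ _ (hx2 j)⟩
    show c • x.1 = 0
    rw [hx1 h, smul_zero]
  lie_mem := by
    rintro x m ⟨hm1, hm2⟩
    rw [bracket_def]
    refine ⟨fun _ => rfl, fun j => ?_⟩
    show mval x.1 * (m.2 j + C (m.1 j)) - mval m.1 * (x.2 j + C (x.1 j)) ∈ Pdeg g _
    rcases Nat.eq_zero_or_pos k with hk | hk
    · subst hk; exact Pdeg_zero _
    · obtain ⟨k', rfl⟩ : ∃ k', k = k' + 1 := ⟨k - 1, by omega⟩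
      have hm1' : m.1 = 0 := hm1 (Nat.succ_ne_zero _)
      have : m.2 j + C (m.1 j) ∈ Pdeg g (k' + 1) := by
        rw [hm1']
        simpa using hm2 j
      have h1 : mval x.1 * (m.2 j + C (m.1 j)) ∈ Pdeg g (k' + 1) :=
        Pdeg_anti (mval_mul_Pdeg _ this)
      have h2 : mval m.1 * (x.2 j + C (x.1 j)) = 0 := by rw [hm1', mval_zero, zero_mul]
      rw [h2, sub_zero]
      exact h1

lemma mem_AK {k : ℕ} {x : A g} :
    x ∈ AK g k ↔ (k ≠ 0 → x.1 = 0) ∧ ∀ j, x.2 j ∈ Pdeg g k := Iff.rfl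

lemma lie_mem_AK {k : ℕ} (x : A g) {y : A g} (hy : y ∈ AK g k) : ⁅x, y⁆ ∈ AK g (k+1) := by
  obtain ⟨hy1, hy2⟩ := hy
  rw [bracket_def, mem_AK]
  refine ⟨fun _ => rfl, fun j => ?_⟩
  rcases Nat.eq_zero_or_pos k with hk | hk
  · subst hk
    exact Submodule.sub_mem _ (mval_mul_Pdeg _ (Pdeg_zero _)) (mval_mul_Pdeg _ (Pdeg_zero _))
  · obtain ⟨k', rfl⟩ : ∃ k', k = k' + 1 := ⟨k - 1, by omega⟩
    have hy1' : y.1 = 0 := hy1 (Nat.succ_ne_zero _)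
    have h2 : mval y.1 * (x.2 j + C (x.1 j)) = 0 := by rw [hy1', mval_zero, zero_mul]
    have : y.2 j + C (y.1 j) ∈ Pdeg g (k' + 1) := by rw [hy1']; simpa using hy2 j
    show mval x.1 * (y.2 j + C (y.1 j)) - mval y.1 * (x.2 j + C (x.1 j)) ∈ Pdeg g _
    rw [h2, sub_zero]
    exact mval_mul_Pdeg _ this

/-- The generators of the model algebra. -/
noncomputable def gen (i : Fin (2*g)) : A g := (Pi.single i 1, 0)

/-- The canonical morphism from the free Lie algebra to the model. -/
noncomputable def φ (g : ℕ) : FreeLieAlgebra ℚ (Fin (2*g)) →ₗ⁅ℚ⁆ A g :=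
  FreeLieAlgebra.lift ℚ gen

lemma φ_of (i : Fin (2*g)) : φ g (FreeLieAlgebra.of ℚ i) = gen i :=
  FreeLieAlgebra.lift_of_apply _ _

lemma bracket_zero_gen (w : Fin (2*g) → S g) (i : Fin (2*g)) :
    ⁅((0, w) : A g), gen i⁆ = (0, fun k => - X i * w k) := by
  refine Prod.ext (bracket_fst _ _) ?_
  funext k
  rw [bracket_snd]
  show mval ((0 : Fin (2*g) → ℚ)) * ((gen i).2 k + C ((gen i).1 k))
      - mval (gen i).1 * (w k + C ((0 : Fin (2*g) → ℚ) k)) = - X i * w k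
  rw [gen, mval_zero, mval_single]
  simp only [Pi.zero_apply, map_zero, add_zero, zero_mul, zero_sub]
  ring

lemma gen_bracket (i1 i2 : Fin (2*g)) :
    ⁅(gen i1 : A g), gen i2⁆ =
      (0, fun k => (if k = i2 then X i1 else 0) - (if k = i1 then X i2 else 0)) := by
  refine Prod.ext (bracket_fst _ _) ?_
  funext k
  rw [bracket_snd]
  show mval (gen i1).1 * ((gen i2).2 k + C ((gen i2).1 k))
      - mval (gen i2).1 * ((gen i1).2 k + C ((gen i1).1 k)) = _
  rw [gen, gen, mval_single, mval_single]
  simp only [Pi.zero_apply, zero_add, Pi.single_apply, apply_ite C, map_one, map_zero,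
    mul_ite, mul_one, mul_zero]

/-- Image of a left-normed bracket under φ. -/
lemma φ_leftNormedBracket (l : List (Fin (2*g))) :
    ∀ (x : FreeLieAlgebra ℚ (Fin (2*g))) (w : Fin (2*g) → S g), φ g x = (0, w) →
    φ g (leftNormedBracket x l) = (0, fun k => (l.map fun i => - X i).prod * w k) := by
  induction l with
  | nil =>
    intro x w hx
    rw [leftNormedBracket, hx]
    refine Prod.ext rfl ?_
    funext k
    simp
  | cons i l ih =>
    intro x w hx
    rw [leftNormedBracket]
    have hx' : φ g ⁅x, FreeLieAlgebra.of ℚ i⁆ = (0, fun k => - X i * w k) := by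
      rw [LieHom.map_lie, hx, φ_of, bracket_zero_gen]
    rw [ih _ _ hx']
    refine Prod.ext rfl ?_
    funext k
    show (l.map fun i => - X i).prod * (- X i * w k) = ((i :: l).map fun i => - X i).prod * w k
    rw [List.map_cons, List.prod_cons]
    ring

lemma φ_wMonomial (t : AdmissibleTuple g n) :
    φ g (wMonomial t) =
      (0, fun k => ((List.ofFn t.rest).map fun i => - X i).prod *
        ((if k = t.i2 then X t.i1 else 0) - (if k = t.i1 then X t.i2 else 0))) := by
  rw [wMonomial]
  apply φ_leftNormedBracket
  rw [LieHom.map_lie, φ_of, φ_of, gen_bracket]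

/-- Product of negated variables as a signed monomial. -/
lemma prod_neg_X (l : List (Fin (2*g))) :
    (l.map fun i => - X i).prod =
      ((-1 : ℚ) ^ l.length) • monomial (Multiset.toFinsupp (l : Multiset (Fin (2*g)))) (1 : ℚ) := by
  induction l with
  | nil => simp [MvPolynomial.monomial_zero', MvPolynomial.C_1]
  | cons i l ih =>
    rw [List.map_cons, List.prod_cons, ih, List.length_cons]
    have hml : ((i :: l : List (Fin (2*g))) : Multiset (Fin (2*g)))
        = {i} + (l : Multiset (Fin (2*g))) := by
      rw [Multiset.singleton_add, Multiset.cons_coe]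
    rw [hml, map_add, Multiset.toFinsupp_singleton]
    have hX : (X i : S g) = monomial (Finsupp.single i 1) 1 := rfl
    rw [hX, mul_smul_comm, neg_mul, MvPolynomial.monomial_mul, one_mul, smul_neg]
    rw [← neg_smul]
    rw [← neg_one_mul ((-1 : ℚ) ^ l.length), ← pow_succ']

end Lemma21

namespace Lemma21

variable {g n : ℕ}

/-- Multiset of the "rest" entries. -/
def restMS (t : AdmissibleTuple g n) : Multiset (Fin (2*g)) := (List.ofFn t.rest : Multiset _)

lemma mem_restMS {x : Fin (2*g)} {t : AdmissibleTuple g n} :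
    x ∈ restMS t ↔ ∃ k, t.rest k = x := by
  simp [restMS, List.mem_ofFn, Set.mem_range]

/-- The exponent vector attached to an admissible tuple. -/
noncomputable def mon (t : AdmissibleTuple g n) : Fin (2*g) →₀ ℕ :=
  Multiset.toFinsupp (t.i2 ::ₘ restMS t)

/-- The separating linear functional on the model algebra. -/
noncomputable def μ (t : AdmissibleTuple g n) : A g →ₗ[ℚ] ℚ where
  toFun x := MvPolynomial.coeff (mon t) (x.2 t.i1)
  map_add' x y := by simp [MvPolynomial.coeff_add]
  map_smul' c x := by simp [MvPolynomial.coeff_smul]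

lemma μ_apply (t : AdmissibleTuple g n) (x : A g) :
    μ t x = MvPolynomial.coeff (mon t) (x.2 t.i1) := rfl

lemma coeff_P_mul_X (d : Fin (2*g) →₀ ℕ) (l : List (Fin (2*g))) (j : Fin (2*g)) :
    MvPolynomial.coeff d ((l.map fun i => - X i).prod * X j) =
      (-1 : ℚ) ^ l.length * (if Multiset.toFinsupp (j ::ₘ (l : Multiset (Fin (2*g)))) = d then 1 else 0) := by
  rw [prod_neg_X, smul_mul_assoc]
  have hX : (X j : S g) = monomial (Finsupp.single j 1) 1 := rfl
  rw [hX, MvPolynomial.monomial_mul, one_mul]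
  rw [MvPolynomial.coeff_smul, smul_eq_mul]
  congr 1
  have : Multiset.toFinsupp (j ::ₘ (l : Multiset (Fin (2*g))))
      = Multiset.toFinsupp (l : Multiset (Fin (2*g))) + Finsupp.single j 1 := by
    rw [show (j ::ₘ (l : Multiset (Fin (2*g)))) = {j} + (l : Multiset (Fin (2*g))) from
      (Multiset.singleton_add _ _).symm, map_add, Multiset.toFinsupp_singleton, add_comm]
  rw [MvPolynomial.coeff_monomial, this]

lemma μ_φ_wMonomial (s t : AdmissibleTuple g n) :
    μ t (φ g (wMonomial s)) =
      (-1 : ℚ) ^ (n - 2) *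
        ((if t.i1 = s.i2 then (if Multiset.toFinsupp (s.i1 ::ₘ restMS s) = mon t then (1:ℚ) else 0) else 0)
         - (if t.i1 = s.i1 then (if Multiset.toFinsupp (s.i2 ::ₘ restMS s) = mon t then (1:ℚ) else 0) else 0)) := by
  rw [μ_apply, φ_wMonomial]
  show MvPolynomial.coeff (mon t)
    (((List.ofFn s.rest).map fun i => - X i).prod *
      ((if t.i1 = s.i2 then X s.i1 else 0) - (if t.i1 = s.i1 then X s.i2 else 0))) = _
  rw [mul_sub, mul_ite, mul_ite]
  simp only [mul_zero]
  rw [MvPolynomial.coeff_sub]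
  rw [apply_ite (MvPolynomial.coeff (mon t)), apply_ite (MvPolynomial.coeff (mon t))]
  simp only [MvPolynomial.coeff_zero]
  rw [coeff_P_mul_X, coeff_P_mul_X, List.length_ofFn]
  simp only [restMS, mul_ite, mul_one, mul_zero, mul_sub]
  split_ifs <;> simp_all [Multiset.cons_coe]

lemma toFinsupp_injective' :
    Function.Injective (Multiset.toFinsupp : Multiset (Fin (2*g)) → (Fin (2*g) →₀ ℕ)) :=
  Multiset.toFinsupp.injective

lemma case1_false (s t : AdmissibleTuple g n) (h : t.i1 = s.i2) :
    Multiset.toFinsupp (s.i1 ::ₘ restMS s) ≠ mon t := by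
  intro heq
  have hms : s.i1 ::ₘ restMS s = t.i2 ::ₘ restMS t := toFinsupp_injective' heq
  have hmem : t.i2 ∈ s.i1 ::ₘ restMS s := by rw [hms]; exact Multiset.mem_cons_self _ _
  have hle : t.i2 ≤ t.i1 := by
    rcases Multiset.mem_cons.1 hmem with h' | h'
    · rw [h']; exact le_of_lt (lt_of_lt_of_le s.lt (le_of_eq h.symm))
    · obtain ⟨k, hk⟩ := mem_restMS.1 h'
      rw [← hk]; exact le_trans (s.le k) (le_of_eq h.symm)
  exact absurd t.lt (not_lt.mpr hle)

lemma case2_eq (s t : AdmissibleTuple g n) (h : t.i1 = s.i1)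
    (heq : Multiset.toFinsupp (s.i2 ::ₘ restMS s) = mon t) : s = t := by
  have hms : s.i2 ::ₘ restMS s = t.i2 ::ₘ restMS t := toFinsupp_injective' heq
  have hle1 : s.i2 ≤ t.i2 := by
    have hmem : s.i2 ∈ t.i2 ::ₘ restMS t := by rw [← hms]; exact Multiset.mem_cons_self _ _
    rcases Multiset.mem_cons.1 hmem with h' | h'
    · exact le_of_eq h'
    · obtain ⟨k, hk⟩ := mem_restMS.1 h'; rw [← hk]; exact t.le k
  have hle2 : t.i2 ≤ s.i2 := by
    have hmem : t.i2 ∈ s.i2 ::ₘ restMS s := by rw [hms]; exact Multiset.mem_cons_self _ _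
    rcases Multiset.mem_cons.1 hmem with h' | h'
    · exact le_of_eq h'
    · obtain ⟨k, hk⟩ := mem_restMS.1 h'; rw [← hk]; exact s.le k
  have hi2 : s.i2 = t.i2 := le_antisymm hle1 hle2
  rw [hi2] at hms
  have hrest : restMS s = restMS t := (Multiset.cons_inj_right _).1 hms
  have hperm : (List.ofFn s.rest).Perm (List.ofFn t.rest) := Multiset.coe_eq_coe.1 hrest
  haveI : IsAntisymm (Fin (2*g)) (· ≥ ·) := ⟨fun a b h1 h2 => le_antisymm h2 h1⟩
  have hsorted : ∀ (u : AdmissibleTuple g n), (List.ofFn u.rest).Pairwise (· ≥ ·) := by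
    intro u
    rw [List.pairwise_ofFn]
    intro a b hab
    exact u.anti (le_of_lt hab)
  have hlist : List.ofFn s.rest = List.ofFn t.rest :=
    List.Perm.eq_of_pairwise' (hsorted s) (hsorted t) hperm
  have hrestfn : s.rest = t.rest := List.ofFn_injective hlist
  obtain ⟨a1, a2, ar, _, _, _⟩ := s
  obtain ⟨b1, b2, br, _, _, _⟩ := t
  simp only at h hi2 hrestfn
  simp only [AdmissibleTuple.mk.injEq]
  exact ⟨h.symm, hi2, hrestfn⟩

lemma μ_eval_self (t : AdmissibleTuple g n) :
    μ t (φ g (wMonomial t)) = - (-1 : ℚ) ^ (n - 2) := by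
  rw [μ_φ_wMonomial]
  rw [if_neg (ne_of_lt t.lt), if_pos rfl,
    if_pos (show Multiset.toFinsupp (t.i2 ::ₘ restMS t) = mon t from rfl)]
  ring

lemma μ_eval_ne (s t : AdmissibleTuple g n) (hst : s ≠ t) :
    μ t (φ g (wMonomial s)) = 0 := by
  rw [μ_φ_wMonomial]
  have h1 : (if t.i1 = s.i2 then (if Multiset.toFinsupp (s.i1 ::ₘ restMS s) = mon t then (1:ℚ) else 0) else 0) = 0 := by
    by_cases h : t.i1 = s.i2
    · rw [if_pos h, if_neg (case1_false s t h)]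
    · rw [if_neg h]
  have h2 : (if t.i1 = s.i1 then (if Multiset.toFinsupp (s.i2 ::ₘ restMS s) = mon t then (1:ℚ) else 0) else 0) = 0 := by
    by_cases h : t.i1 = s.i1
    · rw [if_pos h]
      rw [if_neg]
      intro heq
      exact hst (case2_eq s t h heq)
    · rw [if_neg h]
  rw [h1, h2, sub_zero, mul_zero]

/-- The ideal of elements with vanishing first component. -/
def Kv (g : ℕ) : LieIdeal ℚ (A g) where
  carrier := {x | x.1 = 0}
  add_mem' := by rintro x y (hx : x.1 = 0) (hy : y.1 = 0); show x.1 + y.1 = 0; rw [hx, hy, add_zero]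
  zero_mem' := rfl
  smul_mem' := by rintro c x (hx : x.1 = 0); show c • x.1 = 0; rw [hx, smul_zero]
  lie_mem := fun {x m} _ => bracket_fst x m

lemma bracket_eq_zero_of_fst_zero {x y : A g} (hx : x.1 = 0) (hy : y.1 = 0) :
    ⁅x, y⁆ = 0 := by
  refine Prod.ext (bracket_fst _ _) ?_
  funext j
  rw [bracket_snd, hx, hy, mval_zero]
  simp

lemma φ_lcs_le (k : ℕ) :
    LieModule.lowerCentralSeries ℚ (FreeLieAlgebra ℚ (Fin (2*g))) (FreeLieAlgebra ℚ (Fin (2*g))) k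
      ≤ LieIdeal.comap (φ g) (AK g k) := by
  induction k with
  | zero =>
    intro x _
    rw [LieIdeal.mem_comap, mem_AK]
    exact ⟨fun h => absurd rfl h, fun j => Pdeg_zero _⟩
  | succ k ih =>
    rw [LieModule.lowerCentralSeries_succ]
    rw [LieSubmodule.lie_le_iff]
    intro x _ m hm
    rw [LieIdeal.mem_comap, LieHom.map_lie]
    exact lie_mem_AK _ (LieIdeal.mem_comap.1 (ih hm))

lemma φ_derived (x : FreeLieAlgebra ℚ (Fin (2*g)))
    (hx : x ∈ LieAlgebra.derivedSeries ℚ (FreeLieAlgebra ℚ (Fin (2*g))) 2) : φ g x = 0 := by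
  have hD1 : LieAlgebra.derivedSeries ℚ (FreeLieAlgebra ℚ (Fin (2*g))) 1
      ≤ LieIdeal.comap (φ g) (Kv g) := by
    rw [LieAlgebra.derivedSeries_def, LieAlgebra.derivedSeriesOfIdeal_succ,
      LieAlgebra.derivedSeriesOfIdeal_zero]
    rw [LieSubmodule.lie_le_iff]
    intro a _ b _
    rw [LieIdeal.mem_comap, LieHom.map_lie]
    exact bracket_fst _ _
  have hD2 : LieAlgebra.derivedSeries ℚ (FreeLieAlgebra ℚ (Fin (2*g))) 2
      ≤ LieIdeal.comap (φ g) ⊥ := by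
    rw [LieAlgebra.derivedSeries_def, LieAlgebra.derivedSeriesOfIdeal_succ]
    rw [LieSubmodule.lie_le_iff]
    intro a ha b hb
    rw [LieIdeal.mem_comap, LieHom.map_lie, LieSubmodule.mem_bot]
    exact bracket_eq_zero_of_fst_zero (LieIdeal.mem_comap.1 (hD1 ha)) (LieIdeal.mem_comap.1 (hD1 hb))
  have := LieIdeal.mem_comap.1 (hD2 hx)
  rwa [LieSubmodule.mem_bot] at this

lemma deg_mon (hn : 2 ≤ n) (t : AdmissibleTuple g n) : deg (mon t) = n - 1 := by
  have : deg (mon t) = Multiset.card (t.i2 ::ₘ restMS t) := by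
    rw [mon]
    exact Multiset.toFinsupp_sum_eq _
  rw [this, Multiset.card_cons, restMS, Multiset.coe_card, List.length_ofFn]
  omega

lemma μ_AK (hn : 2 ≤ n) (t : AdmissibleTuple g n) {x : A g} (hx : x ∈ AK g n) : μ t x = 0 := by
  rw [μ_apply]
  exact (mem_AK.1 hx).2 t.i1 _ (by rw [deg_mon hn]; omega)

end Lemma21

/-- Lemma 2.1: the admissible left-normed Lie monomials of degree `n` are linearly
independent in `L/(L^{n+1} + I)`, where `L` is the free Lie algebra on `2g` generators,
`L^{n+1}` is the `(n+1)`-st term of the lower central series (`lowerCentralSeries … n`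
in Mathlib's indexing, which starts at `0`) and `I = [[L,L],[L,L]]` is the second
derived ideal. -/
theorem admissible_monomials_linearIndependent (g n : ℕ) (hg : 1 ≤ g) (hn : 2 ≤ n) :
    LinearIndependent ℚ
      (fun t : AdmissibleTuple g n =>
        (Submodule.Quotient.mk (wMonomial t) :
          FreeLieAlgebra ℚ (Fin (2 * g)) ⧸
            (LieModule.lowerCentralSeries ℚ (FreeLieAlgebra ℚ (Fin (2 * g)))
                (FreeLieAlgebra ℚ (Fin (2 * g))) n ⊔
              LieAlgebra.derivedSeries ℚ (FreeLieAlgebra ℚ (Fin (2 * g))) 2).toSubmodule)) := by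
  classical
  set N : Submodule ℚ (FreeLieAlgebra ℚ (Fin (2 * g))) :=
    (LieModule.lowerCentralSeries ℚ (FreeLieAlgebra ℚ (Fin (2 * g)))
        (FreeLieAlgebra ℚ (Fin (2 * g))) n ⊔
      LieAlgebra.derivedSeries ℚ (FreeLieAlgebra ℚ (Fin (2 * g))) 2).toSubmodule with hN
  rw [linearIndependent_iff]
  intro l hl
  ext t
  simp only [Finsupp.coe_zero, Pi.zero_apply]
  have hker : N ≤ LinearMap.ker ((Lemma21.μ t).comp (Lemma21.φ g).toLinearMap) := by
    rw [hN, LieSubmodule.sup_toSubmodule]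
    apply sup_le
    · intro x hx
      rw [LinearMap.mem_ker, LinearMap.comp_apply]
      have hx' : x ∈ LieModule.lowerCentralSeries ℚ (FreeLieAlgebra ℚ (Fin (2 * g)))
          (FreeLieAlgebra ℚ (Fin (2 * g))) n := hx
      exact Lemma21.μ_AK hn t (LieIdeal.mem_comap.1 (Lemma21.φ_lcs_le n hx'))
    · intro x hx
      rw [LinearMap.mem_ker, LinearMap.comp_apply]
      have hx' : x ∈ LieAlgebra.derivedSeries ℚ (FreeLieAlgebra ℚ (Fin (2 * g))) 2 := hx
      rw [LieHom.coe_toLinearMap, Lemma21.φ_derived x hx', map_zero]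
  set F : (FreeLieAlgebra ℚ (Fin (2 * g)) ⧸ N) →ₗ[ℚ] ℚ :=
    Submodule.liftQ N ((Lemma21.μ t).comp (Lemma21.φ g).toLinearMap) hker with hF
  have h0 := congrArg F hl
  rw [map_zero, Finsupp.apply_linearCombination, Finsupp.linearCombination_apply] at h0
  have hFv : ∀ s : AdmissibleTuple g n,
      (F ∘ fun t : AdmissibleTuple g n => (Submodule.Quotient.mk (wMonomial t) :
        FreeLieAlgebra ℚ (Fin (2 * g)) ⧸ N)) s = Lemma21.μ t (Lemma21.φ g (wMonomial s)) := by
    intro s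
    simp only [Function.comp_apply, hF]
    rw [Submodule.liftQ_apply]
    rfl
  rw [Finsupp.sum_eq_single t (fun s hs hst => ?_) (fun _ => ?_)] at h0
  · rw [hFv t, Lemma21.μ_eval_self] at h0
    have hne : -(-1 : ℚ) ^ (n - 2) ≠ 0 := by
      simp only [ne_eq, neg_eq_zero]
      exact pow_ne_zero _ (by norm_num)
    have := mul_eq_zero.1 h0
    rcases this with h | h
    · exact h
    · exact absurd h hne
  · rw [hFv s, Lemma21.μ_eval_ne s t hst, smul_zero]
  · rw [zero_smul]
end

section
/- Let M be a Lie algebra over ℚ that is generated as a Lie algebra by finitely many elements x_1, …, x_r and satisfies [[M,M],[M,M]] = 0, and let ω ∈ [M,M]. Then the Lie ideal of M generated by ω equals the ℚ-linear span of the elements ad(x_{j_{m}}) ∘ ⋯ ∘ ad(x_{j_1})(ω) taken over all m ≥ 0 and all non-increasing index tuples r ≥ j_1 ≥ j_2 ≥ ⋯ ≥ j_m ≥ 1. -/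
/-- Iterated adjoint operators: `adIter x [j₁, …, jₘ] y = [[⋯[y, x_{j₁}], ⋯], x_{jₘ}]`,
that is, `ad(x_{jₘ}) ∘ ⋯ ∘ ad(x_{j₁})` applied to `y`, where `ad(v) = [·, v]`. -/
def adIter {M : Type*} [LieRing M] {r : ℕ} (x : Fin r → M) : List (Fin r) → M → M
  | [], y => y
  | j :: l, y => adIter x l ⁅y, x j⁆

section aux

variable {M : Type*} [LieRing M] [LieAlgebra ℚ M] {r : ℕ} (x : Fin r → M)

omit [LieAlgebra ℚ M] in
lemma adIter_append_singleton (l : List (Fin r)) (j : Fin r) (y : M) :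
    adIter x (l ++ [j]) y = ⁅adIter x l y, x j⁆ := by
  induction l generalizing y with
  | nil => rfl
  | cons a l ih => simp [adIter, ih]

lemma adIter_mem_lieSubmodule (N : LieSubmodule ℚ M M) (l : List (Fin r)) {y : M}
    (hy : y ∈ N) : adIter x l y ∈ N := by
  induction l generalizing y with
  | nil => exact hy
  | cons a l ih =>
    refine ih ?_
    have h1 : ⁅x a, y⁆ ∈ N := N.lie_mem hy
    simpa using N.neg_mem h1

lemma comm_of_metabelian (hmet : LieAlgebra.derivedSeries ℚ M 2 = ⊥)
    {y : M} (hy : y ∈ LieAlgebra.derivedSeries ℚ M 1) (a b : M) :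
    ⁅⁅y, a⁆, b⁆ = ⁅⁅y, b⁆, a⁆ := by
  have hab : ⁅a, b⁆ ∈ LieAlgebra.derivedSeries ℚ M 1 := by
    rw [show (1 : ℕ) = 0 + 1 from rfl, LieAlgebra.derivedSeries_def,
      LieAlgebra.derivedSeriesOfIdeal_succ]
    exact LieSubmodule.lie_mem_lie (LieSubmodule.mem_top _) (LieSubmodule.mem_top _)
  have h0 : ⁅y, ⁅a, b⁆⁆ = 0 := by
    have hmem : ⁅y, ⁅a, b⁆⁆ ∈ LieAlgebra.derivedSeries ℚ M 2 := by
      rw [show (2 : ℕ) = 1 + 1 from rfl, LieAlgebra.derivedSeries_def,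
        LieAlgebra.derivedSeriesOfIdeal_succ]
      exact LieSubmodule.lie_mem_lie
        (by rwa [LieAlgebra.derivedSeries_def] at hy)
        (by rwa [LieAlgebra.derivedSeries_def] at hab)
    rw [hmet] at hmem
    exact (LieSubmodule.mem_bot _).mp hmem
  have hl := leibniz_lie y a b
  rw [h0] at hl
  have key : ⁅⁅y, a⁆, b⁆ = -⁅a, ⁅y, b⁆⁆ := eq_neg_of_add_eq_zero_left hl.symm
  exact key.trans (lie_skew _ _)

lemma adIter_perm (hmet : LieAlgebra.derivedSeries ℚ M 2 = ⊥)
    {l l' : List (Fin r)} (h : l.Perm l') :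
    ∀ y ∈ LieAlgebra.derivedSeries ℚ M 1, adIter x l y = adIter x l' y := by
  induction h with
  | nil => intro y _; rfl
  | cons a h ih =>
    intro y hy
    have hmem : ⁅y, x a⁆ ∈ LieAlgebra.derivedSeries ℚ M 1 := by
      have h1 := (LieAlgebra.derivedSeries ℚ M 1).lie_mem (x := x a) hy
      simpa using (LieAlgebra.derivedSeries ℚ M 1).neg_mem h1
    exact ih _ hmem
  | swap a b l =>
    intro y hy
    show adIter x l ⁅⁅y, x b⁆, x a⁆ = adIter x l ⁅⁅y, x a⁆, x b⁆
    rw [comm_of_metabelian hmet hy (x b) (x a)]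
  | trans h1 h2 ih1 ih2 =>
    intro y hy
    exact (ih1 y hy).trans (ih2 y hy)

end aux

/-- Let `M` be a Lie algebra over `ℚ` generated (as a Lie algebra) by `x₁, …, x_r`,
satisfying `[[M,M],[M,M]] = 0`, and let `ω ∈ [M,M]`.  Then the Lie ideal of `M`
generated by `ω` is the `ℚ`-linear span of the iterated adjoints
`ad(x_{jₘ}) ∘ ⋯ ∘ ad(x_{j₁})(ω)` over all `m ≥ 0` and all non-increasing index
tuples `j₁ ≥ j₂ ≥ ⋯ ≥ jₘ`. -/
theorem lieIdeal_span_eq_span_sorted_adIter {M : Type*} [LieRing M] [LieAlgebra ℚ M]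
    {r : ℕ} (x : Fin r → M)
    (hgen : LieSubalgebra.lieSpan ℚ M (Set.range x) = ⊤)
    (hmet : LieAlgebra.derivedSeries ℚ M 2 = ⊥)
    (ω : M) (hω : ω ∈ LieAlgebra.derivedSeries ℚ M 1) :
    (LieSubmodule.lieSpan ℚ M {ω}).toSubmodule =
      Submodule.span ℚ
        {y : M | ∃ l : List (Fin r), l.Pairwise (· ≥ ·) ∧ y = adIter x l ω} := by

  classical
  set S : Submodule ℚ M :=
    Submodule.span ℚ {y : M | ∃ l : List (Fin r), y = adIter x l ω} with hS
  -- S is stable under bracketing with the generators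
  have hx : ∀ j : Fin r, ∀ y ∈ S, ⁅x j, y⁆ ∈ S := by
    intro j y hy
    induction hy using Submodule.span_induction with
    | mem y h =>
      obtain ⟨l, rfl⟩ := h
      have h1 : adIter x (l ++ [j]) ω ∈ S :=
        Submodule.subset_span ⟨l ++ [j], rfl⟩
      rw [adIter_append_singleton] at h1
      have := S.neg_mem h1
      simpa using this
    | zero => simp
    | add u v _ _ hu hv => rw [lie_add]; exact S.add_mem hu hv
    | smul c u _ hu => rw [lie_smul]; exact S.smul_mem c hu
  -- hence S is stable under bracketing with everything (generation)
  have hT : ∀ m : M, ∀ y ∈ S, ⁅m, y⁆ ∈ S := by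
    let T : LieSubalgebra ℚ M :=
      { carrier := {m : M | ∀ y ∈ S, ⁅m, y⁆ ∈ S}
        add_mem' := fun {a b} ha hb y hy => by
          rw [add_lie]; exact S.add_mem (ha y hy) (hb y hy)
        zero_mem' := fun y hy => by simp
        smul_mem' := fun c a ha y hy => by
          rw [smul_lie]; exact S.smul_mem c (ha y hy)
        lie_mem' := fun {a b} ha hb y hy => by
          rw [lie_lie]
          exact S.sub_mem (ha _ (hb y hy)) (hb _ (ha y hy)) }
    have hsub : Set.range x ⊆ T := by
      rintro _ ⟨j, rfl⟩
      exact hx j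
    have hle : LieSubalgebra.lieSpan ℚ M (Set.range x) ≤ T :=
      LieSubalgebra.lieSpan_le.mpr hsub
    rw [hgen] at hle
    intro m
    exact hle (LieSubalgebra.mem_top m)
  -- S as a Lie submodule
  let N : LieSubmodule ℚ M M :=
    { toSubmodule := S
      lie_mem := fun {m y} hy => hT m y hy }
  -- the Lie span of ω equals S
  have h1 : (LieSubmodule.lieSpan ℚ M {ω}).toSubmodule = S := by
    apply le_antisymm
    · have : LieSubmodule.lieSpan ℚ M {ω} ≤ N := by
        rw [LieSubmodule.lieSpan_le]
        intro y hy
        rw [Set.mem_singleton_iff] at hy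
        subst hy
        exact Submodule.subset_span ⟨[], rfl⟩
      exact this
    · rw [hS, Submodule.span_le]
      rintro _ ⟨l, rfl⟩
      exact adIter_mem_lieSubmodule x (LieSubmodule.lieSpan ℚ M {ω}) l
        (LieSubmodule.subset_lieSpan rfl)
  rw [h1]
  -- S equals the span over sorted lists
  apply le_antisymm
  · rw [hS, Submodule.span_le]
    rintro _ ⟨l, rfl⟩
    have hperm : (List.insertionSort (· ≥ ·) l).Perm l := List.perm_insertionSort _ _
    have heq : adIter x l ω = adIter x (List.insertionSort (· ≥ ·) l) ω :=
      adIter_perm x hmet hperm.symm ω hω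
    rw [heq]
    exact Submodule.subset_span
      ⟨List.insertionSort (· ≥ ·) l, List.pairwise_insertionSort _ _, rfl⟩
  · apply Submodule.span_mono
    rintro _ ⟨l, _, rfl⟩
    exact ⟨l, rfl⟩
end

section
/- Let g ≥ 1, let m be a natural number, and let ε ∈ {0,1}. Then ∑_{i+j=m, j ≡ ε mod 2} C(i+g−1, g−1)·C(j+g−1, g−1) ≤ ∑_{i+j=m+1, j ≡ ε mod 2} C(i+g−1, g−1)·C(j+g−1, g−1), where the sums are over pairs (i,j) of natural numbers with the indicated sum and with j of parity ε, and C(a,b) denotes the binomial coefficient. -/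
/-- For `g ≥ 1`, any `m`, and parity `ε ∈ {0,1}`, the parity-refined convolution
`∑_{i+j=m, j ≡ ε (mod 2)} C(i+g−1, g−1)·C(j+g−1, g−1)` is monotone in `m`. -/
theorem parity_convolution_mono (g m ε : ℕ) (hg : 1 ≤ g) (hε : ε = 0 ∨ ε = 1) :
    ∑ p ∈ (Finset.HasAntidiagonal.antidiagonal m).filter (fun p => p.2 % 2 = ε),
        Nat.choose (p.1 + g - 1) (g - 1) * Nat.choose (p.2 + g - 1) (g - 1) ≤
      ∑ p ∈ (Finset.HasAntidiagonal.antidiagonal (m + 1)).filter (fun p => p.2 % 2 = ε),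
        Nat.choose (p.1 + g - 1) (g - 1) * Nat.choose (p.2 + g - 1) (g - 1) := by
  classical
  set w : ℕ × ℕ → ℕ := fun p => Nat.choose (p.1 + g - 1) (g - 1) * Nat.choose (p.2 + g - 1) (g - 1)
  set s := (Finset.HasAntidiagonal.antidiagonal m).filter (fun p => p.2 % 2 = ε)
  set t := (Finset.HasAntidiagonal.antidiagonal (m + 1)).filter (fun p => p.2 % 2 = ε)
  have hmap : ∀ p ∈ s, (p.1 + 1, p.2) ∈ t := by
    intro p hp
    simp only [s, t, Finset.mem_filter, Finset.HasAntidiagonal.mem_antidiagonal] at hp ⊢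
    omega
  calc ∑ p ∈ s, w p ≤ ∑ p ∈ s, w (p.1 + 1, p.2) := by
        refine Finset.sum_le_sum fun p _ => ?_
        refine Nat.mul_le_mul_right _ (Nat.choose_le_choose _ ?_)
        omega
    _ = ∑ q ∈ s.image (fun p => (p.1 + 1, p.2)), w q := by
        rw [Finset.sum_image]
        intro a _ b _ h
        cases a; cases b; simpa using h
    _ ≤ ∑ q ∈ t, w q := by
        refine Finset.sum_le_sum_of_subset ?_
        intro q hq
        obtain ⟨p, hp, rfl⟩ := Finset.mem_image.mp hq
        exact hmap p hp
end

section
/- Let g ≥ 1, let m be a natural number, and let ε ∈ {0,1}. Then 2·∑_{i+j=m, j ≡ ε mod 2} C(i+g−1, g−1)·C(j+g−1, g−1) ≤ C(m+2g, 2g−1), where the sum is over pairs (i,j) of natural numbers with i+j = m and j of parity ε, and C(a,b) denotes the binomial coefficient. -/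
open Finset PowerSeries

/-- Negative-binomial Vandermonde convolution, via power series `(1-X)^{-(d+1)}`. -/
lemma vandermonde_neg (d m : ℕ) :
    ∑ p ∈ Finset.HasAntidiagonal.antidiagonal m,
        Nat.choose (p.1 + d) d * Nat.choose (p.2 + d) d
      = Nat.choose (m + (2 * d + 1)) (2 * d + 1) := by
  have hu : (invOneSubPow ℤ (d + 1)) * (invOneSubPow ℤ (d + 1))
      = invOneSubPow ℤ (2 * d + 1 + 1) := by
    rw [invOneSubPow_eq_inv_one_sub_pow, invOneSubPow_eq_inv_one_sub_pow, ← pow_add]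
    congr 1
    ring
  have hv : ((invOneSubPow ℤ (d + 1)).val * (invOneSubPow ℤ (d + 1)).val)
      = (invOneSubPow ℤ (2 * d + 1 + 1)).val := by
    rw [← Units.val_mul, hu]
  have hc := congrArg (PowerSeries.coeff (R := ℤ) m) hv
  rw [PowerSeries.coeff_mul] at hc
  simp only [invOneSubPow_val_succ_eq_mk_add_choose, PowerSeries.coeff_mk] at hc
  have : ((∑ p ∈ Finset.HasAntidiagonal.antidiagonal m,
      Nat.choose (p.1 + d) d * Nat.choose (p.2 + d) d : ℕ) : ℤ)
      = ((Nat.choose (m + (2 * d + 1)) (2 * d + 1) : ℕ) : ℤ) := by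
    push_cast
    rw [add_comm m (2 * d + 1), ← hc]
    apply Finset.sum_congr rfl
    intro p hp
    rw [add_comm p.1 d, add_comm p.2 d]
  exact_mod_cast this

/-- parity-refined sum monotonicity: shift the first coordinate. -/
lemma parity_sum_mono (g m ε : ℕ) :
    ∑ p ∈ (Finset.HasAntidiagonal.antidiagonal m).filter (fun p => p.2 % 2 = ε),
        Nat.choose (p.1 + g - 1) (g - 1) * Nat.choose (p.2 + g - 1) (g - 1) ≤
    ∑ p ∈ (Finset.HasAntidiagonal.antidiagonal (m + 1)).filter (fun p => p.2 % 2 = ε),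
        Nat.choose (p.1 + g - 1) (g - 1) * Nat.choose (p.2 + g - 1) (g - 1) := by
  set f : ℕ × ℕ → ℕ := fun p => Nat.choose (p.1 + g - 1) (g - 1) * Nat.choose (p.2 + g - 1) (g - 1)
  have hinj : Set.InjOn (fun p : ℕ × ℕ => (p.1 + 1, p.2))
      ((Finset.HasAntidiagonal.antidiagonal m).filter (fun p => p.2 % 2 = ε)) := by
    intro a _ b _ h
    simp only [Prod.mk.injEq] at h
    exact Prod.ext (by omega) h.2
  calc ∑ p ∈ (Finset.HasAntidiagonal.antidiagonal m).filter (fun p => p.2 % 2 = ε), f p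
      ≤ ∑ p ∈ (Finset.HasAntidiagonal.antidiagonal m).filter (fun p => p.2 % 2 = ε),
          f (p.1 + 1, p.2) := by
        apply Finset.sum_le_sum
        intro p _
        apply Nat.mul_le_mul_right
        apply Nat.choose_le_choose
        omega
    _ = ∑ p ∈ ((Finset.HasAntidiagonal.antidiagonal m).filter (fun p => p.2 % 2 = ε)).image
          (fun p : ℕ × ℕ => (p.1 + 1, p.2)), f p := by
        rw [Finset.sum_image (fun a ha b hb => hinj ha hb)]
    _ ≤ ∑ p ∈ (Finset.HasAntidiagonal.antidiagonal (m + 1)).filter (fun p => p.2 % 2 = ε), f p := by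
        apply Finset.sum_le_sum_of_subset
        intro p hp
        simp only [Finset.mem_image, Finset.mem_filter, Finset.HasAntidiagonal.mem_antidiagonal] at hp ⊢
        obtain ⟨q, ⟨hq1, hq2⟩, rfl⟩ := hp
        exact ⟨by omega, hq2⟩

/-- For odd `m`, the two parity classes have equal sums. -/
lemma parity_sum_swap (g m ε : ℕ) (hm : m % 2 = 1) (hε : ε = 0 ∨ ε = 1) :
    ∑ p ∈ (Finset.HasAntidiagonal.antidiagonal m).filter (fun p => p.2 % 2 = ε),
        Nat.choose (p.1 + g - 1) (g - 1) * Nat.choose (p.2 + g - 1) (g - 1) =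
    ∑ p ∈ (Finset.HasAntidiagonal.antidiagonal m).filter (fun p => ¬ p.2 % 2 = ε),
        Nat.choose (p.1 + g - 1) (g - 1) * Nat.choose (p.2 + g - 1) (g - 1) := by
  apply Finset.sum_nbij' (fun p => Prod.swap p) (fun p => Prod.swap p)
  · intro p hp
    simp only [Finset.mem_filter, Finset.HasAntidiagonal.mem_antidiagonal, Prod.fst_swap, Prod.snd_swap] at hp ⊢
    omega
  · intro p hp
    simp only [Finset.mem_filter, Finset.HasAntidiagonal.mem_antidiagonal, Prod.fst_swap, Prod.snd_swap] at hp ⊢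
    omega
  · intro p _; exact Prod.swap_swap p
  · intro p _; exact Prod.swap_swap p
  · intro p _
    simp [Prod.fst_swap, Prod.snd_swap, Nat.mul_comm]

/-- For odd `m`, twice a parity-class sum equals the full convolution. -/
lemma parity_sum_odd (g m ε : ℕ) (hg : 1 ≤ g) (hm : m % 2 = 1) (hε : ε = 0 ∨ ε = 1) :
    2 * ∑ p ∈ (Finset.HasAntidiagonal.antidiagonal m).filter (fun p => p.2 % 2 = ε),
        Nat.choose (p.1 + g - 1) (g - 1) * Nat.choose (p.2 + g - 1) (g - 1) =
      Nat.choose (m + (2 * g - 1)) (2 * g - 1) := by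
  have hsplit := Finset.sum_filter_add_sum_filter_not (Finset.HasAntidiagonal.antidiagonal m)
    (fun p : ℕ × ℕ => p.2 % 2 = ε)
    (fun p : ℕ × ℕ => Nat.choose (p.1 + g - 1) (g - 1) * Nat.choose (p.2 + g - 1) (g - 1))
  have hvand := vandermonde_neg (g - 1) m
  have h2d : 2 * (g - 1) + 1 = 2 * g - 1 := by omega
  rw [h2d] at hvand
  have heq : ∀ p ∈ Finset.HasAntidiagonal.antidiagonal m,
      Nat.choose (p.1 + (g - 1)) (g - 1) * Nat.choose (p.2 + (g - 1)) (g - 1)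
      = Nat.choose (p.1 + g - 1) (g - 1) * Nat.choose (p.2 + g - 1) (g - 1) := by
    intro p _
    congr 2 <;> omega
  rw [Finset.sum_congr rfl heq] at hvand
  rw [parity_sum_swap g m ε hm hε, two_mul, ← hvand]
  rw [← hsplit, parity_sum_swap g m ε hm hε]

/-- For `g ≥ 1`, any `m`, and parity `ε ∈ {0,1}`,
`2·∑_{i+j=m, j ≡ ε (mod 2)} C(i+g−1, g−1)·C(j+g−1, g−1) ≤ C(m+2g, 2g−1)`. -/
theorem parity_convolution_le (g m ε : ℕ) (hg : 1 ≤ g) (hε : ε = 0 ∨ ε = 1) :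
    2 * ∑ p ∈ (Finset.HasAntidiagonal.antidiagonal m).filter (fun p => p.2 % 2 = ε),
        Nat.choose (p.1 + g - 1) (g - 1) * Nat.choose (p.2 + g - 1) (g - 1) ≤
      Nat.choose (m + 2 * g) (2 * g - 1) := by
  rcases Nat.even_or_odd m with he | ho
  · -- m even: compare with m+1
    have hme := Nat.even_iff.mp he
    have h1 := parity_sum_mono g m ε
    have h2 := parity_sum_odd g (m + 1) ε hg (by omega) hε
    have h3 : m + 1 + (2 * g - 1) = m + 2 * g := by omega
    rw [h3] at h2
    omega
  · have h2 := parity_sum_odd g m ε hg (Nat.odd_iff.mp ho) hε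
    have h3 : Nat.choose (m + (2 * g - 1)) (2 * g - 1) ≤ Nat.choose (m + 2 * g) (2 * g - 1) :=
      Nat.choose_le_choose _ (by omega)
    omega
end
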